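/- arXiv:1510.06083 — 4 statements merged into one kernel-verified Lean document; each statement's English description precedes it below -/
import Mathlib

section
/- Fix μ > 0 and λ > 0. For every b ∈ ℝ, ρ_μ(b;λ) + (1/2)μb² = 2λ·B(√(μ/(2λ)) b), where ρ_μ is the perspective penalty (ρ_μ(b;λ) = √(2μλ)|b| − (1/2)μb² if μb² ≤ 2λ, λ otherwise), and B is the reverse Huber penalty B(t) = |t| if |t| ≤ 1, and B(t) = (t²+1)/2 otherwise. -/
open Matrix Finset

/-- The perspective (minimax concave) penalty. -/
noncomputable def rho (δ lam b : ℝ) : ℝ :=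
  if δ * b^2 ≤ 2*lam then Real.sqrt (2*δ*lam) * |b| - (1/2)*δ*b^2 else lam

/-- The reverse Huber penalty. -/
noncomputable def revHuber (t : ℝ) : ℝ :=
  if |t| ≤ 1 then |t| else (t^2 + 1)/2

/-- the reverse Huber penalty as a special case of the perspective penalty. -/
theorem stmt4 (μ lam b : ℝ) (hμ : 0 < μ) (hlam : 0 < lam) :
    rho μ lam b + (1/2)*μ*b^2 = 2*lam * revHuber (Real.sqrt (μ/(2*lam)) * b) := by
  have hs : (0:ℝ) ≤ μ/(2*lam) := by positivity
  have hsq : Real.sqrt (μ/(2*lam)) ^ 2 = μ/(2*lam) := Real.sq_sqrt hs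
  have habs : |Real.sqrt (μ/(2*lam)) * b| = Real.sqrt (μ/(2*lam)) * |b| := by
    rw [abs_mul, abs_of_nonneg (Real.sqrt_nonneg _)]
  have hcond : |Real.sqrt (μ/(2*lam)) * b| ≤ 1 ↔ μ * b^2 ≤ 2*lam := by
    rw [← sq_le_one_iff_abs_le_one, mul_pow, hsq, div_mul_eq_mul_div,
      div_le_one (by positivity)]
  unfold rho revHuber
  by_cases h : μ * b^2 ≤ 2*lam
  · rw [if_pos h, if_pos (hcond.mpr h), habs]
    have key : 2*lam * Real.sqrt (μ/(2*lam)) = Real.sqrt (2*μ*lam) := by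
      rw [show (2:ℝ)*μ*lam = (2*lam)^2 * (μ/(2*lam)) by field_simp,
        Real.sqrt_mul (by positivity), Real.sqrt_sq (by positivity)]
    rw [← key]; ring
  · rw [if_neg h, if_neg (fun hc => h (hcond.mp hc)), mul_pow, hsq]
    field_simp
    ring
end

section
/- Let λ > 0, δ > 0, and define ρ_δ(b;λ) as the perspective (minimax concave) penalty. Then the function b ↦ (δ/2)b² + ρ_δ(b;λ) is convex on ℝ. Consequently, if X^T X − diag(δ) ⪰ 0 with δᵢ ≥ 0 for all i, the function b ↦ (1/2)‖Xb−y‖₂² + ∑ᵢ ρ_{δᵢ}(bᵢ;λ) is convex on ℝ^p. -/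
open Matrix Finset

lemma convexOn_univ_abs' : ConvexOn ℝ Set.univ (fun b : ℝ => |b|) := by
  exact (convexOn_univ_norm (E := ℝ))

lemma rho_aux (δ lam : ℝ) (hδ : 0 ≤ δ) (hlam : 0 < lam) :
    ConvexOn ℝ Set.univ (fun b : ℝ => (δ/2)*b^2 + rho δ lam b) := by
  set a := Real.sqrt (δ/2) with ha_def
  set k := Real.sqrt lam with hk_def
  have ha : 0 ≤ a := Real.sqrt_nonneg _
  have hk : 0 < k := Real.sqrt_pos.2 hlam
  have ha2 : a^2 = δ/2 := Real.sq_sqrt (by linarith)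
  have hk2 : k^2 = lam := Real.sq_sqrt hlam.le
  have hα : Real.sqrt (2*δ*lam) = 2*a*k := by
    rw [show 2*δ*lam = (2*a*k)^2 by nlinarith]
    exact Real.sqrt_sq (by positivity)
  have key : (fun b : ℝ => (δ/2)*b^2 + rho δ lam b)
      = fun b : ℝ => (2*a*k)*|b| + (max (a*|b| - k) 0)^2 := by
    funext b
    have habs : a*|b| = Real.sqrt (δ/2 * b^2) := by
      rw [Real.sqrt_mul (by linarith), Real.sqrt_sq_eq_abs]
    by_cases h : δ * b^2 ≤ 2*lam
    · have h1 : a*|b| ≤ k := by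
        rw [habs, hk_def]; exact Real.sqrt_le_sqrt (by linarith)
      rw [rho, if_pos h, hα, max_eq_right (by linarith)]
      ring
    · push_neg at h
      have h1 : k ≤ a*|b| := by
        rw [habs, hk_def]; exact Real.sqrt_le_sqrt (by nlinarith)
      rw [rho, if_neg (by linarith), max_eq_left (by linarith)]
      have e : (a*|b| - k)^2 = a^2*|b|^2 - 2*a*k*|b| + k^2 := by ring
      rw [e, ha2, hk2, sq_abs]
      ring
  rw [key]
  have c1 : ConvexOn ℝ Set.univ (fun b : ℝ => (2*a*k)*|b|) := by
    simpa [smul_eq_mul] using convexOn_univ_abs'.smul (c := 2*a*k) (by positivity)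
  have clin : ConvexOn ℝ Set.univ (fun b : ℝ => a*|b| - k) := by
    have := (convexOn_univ_abs'.smul (c := a) ha).sub
      (concaveOn_const k convex_univ)
    exact this
  have cu : ConvexOn ℝ Set.univ (fun b : ℝ => max (a*|b| - k) 0) :=
    clin.sup (convexOn_const 0 convex_univ)
  have cu2 : ConvexOn ℝ Set.univ (fun b : ℝ => (max (a*|b| - k) 0)^2) := by
    exact cu.pow (fun x _ => le_max_right _ _) 2
  exact c1.add cu2

lemma comp_eval {p : ℕ} (i : Fin p) {f : ℝ → ℝ}
    (hf : ConvexOn ℝ Set.univ f) :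
    ConvexOn ℝ Set.univ (fun b : Fin p → ℝ => f (b i)) := by
  refine ⟨convex_univ, fun x _ z _ t s ht hs hts => ?_⟩
  simpa using hf.2 (Set.mem_univ (x i)) (Set.mem_univ (z i)) ht hs hts

lemma convexOn_finset_sum {ι : Type*} {E : Type*} [AddCommGroup E] [Module ℝ E]
    (t : Finset ι) (g : ι → E → ℝ)
    (h : ∀ i ∈ t, ConvexOn ℝ Set.univ (g i)) :
    ConvexOn ℝ Set.univ (fun b => ∑ i ∈ t, g i b) := by
  induction t using Finset.cons_induction with
  | empty => simpa using convexOn_const 0 convex_univ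
  | cons i t hi ih =>
    simp only [Finset.sum_cons]
    exact (h i (Finset.mem_cons_self i t)).add
      (ih fun j hj => h j (Finset.mem_cons_of_mem hj))

/-- `b ↦ (δ/2)b² + ρ_δ(b;λ)` is convex; consequently under
`XᵀX − diag(δ) ⪰ 0` the penalized least squares objective is convex. -/
theorem stmt7 (n p : ℕ) (X : Matrix (Fin n) (Fin p) ℝ) (y : Fin n → ℝ)
    (lam : ℝ) (hlam : 0 < lam) :
    (∀ δ : ℝ, 0 < δ → ConvexOn ℝ Set.univ (fun b : ℝ => (δ/2)*b^2 + rho δ lam b)) ∧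
    (∀ δ : Fin p → ℝ, (∀ i, 0 ≤ δ i) → (Xᵀ * X - Matrix.diagonal δ).PosSemidef →
      ConvexOn ℝ Set.univ (fun b : Fin p → ℝ =>
        (1/2) * ∑ i, (X.mulVec b i - y i)^2 + ∑ i, rho (δ i) lam (b i))) := by
  constructor
  · exact fun δ hδ => rho_aux δ lam hδ.le hlam
  · intro δ hδ hM
    -- the quadratic form inequality
    have quad : ∀ d : Fin p → ℝ,
        ∑ i, δ i * (d i)^2 ≤ ∑ i, (X.mulVec d i)^2 := by
      intro d
      have h0 := hM.dotProduct_mulVec_nonneg d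
      have e1 : star d ⬝ᵥ (Xᵀ * X - Matrix.diagonal δ).mulVec d
          = ∑ i, (X.mulVec d i)^2 - ∑ i, δ i * (d i)^2 := by
        rw [Matrix.sub_mulVec, dotProduct_sub]
        congr 1
        · rw [← Matrix.mulVec_mulVec, Matrix.dotProduct_mulVec,
            show star d = d from rfl, Matrix.vecMul_transpose]
          simp [dotProduct, sq]
        · simp only [show star d = d from rfl, dotProduct, Matrix.mulVec_diagonal]
          exact Finset.sum_congr rfl fun i _ => by ring
      rw [e1] at h0
      linarith
    -- convexity of the quadratic part
    have hQ : ConvexOn ℝ Set.univ (fun b : Fin p → ℝ =>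
        (1/2) * ∑ i, (X.mulVec b i - y i)^2 - ∑ i, (δ i/2) * (b i)^2) := by
      refine ⟨convex_univ, fun x _ z _ t s ht hs hts => ?_⟩
      have hmix : ∀ i, X.mulVec (t • x + s • z) i
          = t * X.mulVec x i + s * X.mulVec z i := by
        intro i
        simp [Matrix.mulVec_add, Matrix.mulVec_smul]
      have hdiff : ∀ i, X.mulVec (x - z) i = X.mulVec x i - X.mulVec z i := by
        intro i; simp [Matrix.mulVec_sub]
      have hs' : s = 1 - t := by linarith
      have hsum1 : ∑ i, (X.mulVec (t • x + s • z) i - y i)^2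
          = t * ∑ i, (X.mulVec x i - y i)^2 + s * ∑ i, (X.mulVec z i - y i)^2
            - t*s * ∑ i, (X.mulVec (x - z) i)^2 := by
        rw [Finset.mul_sum, Finset.mul_sum, Finset.mul_sum,
          ← Finset.sum_add_distrib, ← Finset.sum_sub_distrib]
        refine Finset.sum_congr rfl fun i _ => ?_
        rw [hmix i, hdiff i, hs']; ring
      have hsum2 : ∑ i, (δ i/2) * ((t • x + s • z) i)^2
          = t * ∑ i, (δ i/2) * (x i)^2 + s * ∑ i, (δ i/2) * (z i)^2
            - t*s * ∑ i, (δ i/2) * ((x - z) i)^2 := by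
        rw [Finset.mul_sum, Finset.mul_sum, Finset.mul_sum,
          ← Finset.sum_add_distrib, ← Finset.sum_sub_distrib]
        refine Finset.sum_congr rfl fun i _ => ?_
        have : (t • x + s • z) i = t * x i + s * z i := by simp
        have h2 : (x - z) i = x i - z i := by simp
        rw [this, h2, hs']; ring
      have hq := quad (x - z)
      have hq' : ∑ i, (δ i/2) * ((x - z) i)^2 ≤ (1/2) * ∑ i, (X.mulVec (x - z) i)^2 := by
        have e : ∑ i, (δ i/2) * ((x - z) i)^2 = (1/2) * ∑ i, δ i * ((x - z) i)^2 := by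
          rw [Finset.mul_sum]
          exact Finset.sum_congr rfl fun i _ => by ring
        rw [e]
        linarith
      simp only [smul_eq_mul]
      rw [hsum1, hsum2]
      nlinarith [mul_nonneg (mul_nonneg ht hs) (sub_nonneg.2 hq')]
    -- convexity of the separable penalty part
    have hS : ConvexOn ℝ Set.univ (fun b : Fin p → ℝ =>
        ∑ i, ((δ i/2) * (b i)^2 + rho (δ i) lam (b i))) :=
      convexOn_finset_sum Finset.univ
        (fun i (b : Fin p → ℝ) => (δ i/2) * (b i)^2 + rho (δ i) lam (b i))
        (fun i _ => comp_eval i (rho_aux (δ i) lam (hδ i) hlam))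
    have hfe : (fun b : Fin p → ℝ =>
        (1/2) * ∑ i, (X.mulVec b i - y i)^2 + ∑ i, rho (δ i) lam (b i))
        = fun b : Fin p → ℝ =>
          ((1/2) * ∑ i, (X.mulVec b i - y i)^2 - ∑ i, (δ i/2) * (b i)^2)
          + ∑ i, ((δ i/2) * (b i)^2 + rho (δ i) lam (b i)) := by
      funext b
      rw [Finset.sum_add_distrib]
      ring
    rw [hfe]
    exact hQ.add hS
end

section
/- Suppose (ε, α, δ, t) is feasible for the dual SDP, i.e. [[ε, αᵀ],[α, XᵀX − diag(δ)]] ⪰ 0, [[δᵢ, tᵢ],[tᵢ, 2λ]] ⪰ 0 for all i, and αᵢ + (Xᵀy)ᵢ + tᵢ = 0 for all i. Then for every (b̄, s̄, z̄) with s̄ᵢz̄ᵢ ≥ b̄ᵢ², s̄ᵢ ≥ 0, z̄ᵢ ∈ [0,1], one has −(1/2)ε ≤ (1/2)b̄ᵀ(XᵀX − diag(δ))b̄ − (Xᵀy)ᵀb̄ + (1/2)∑ᵢδᵢs̄ᵢ + λ∑ᵢz̄ᵢ. -/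
open Matrix Finset

/-- weak duality between the dual SDP and the perspective relaxation. -/
theorem stmt13 (n p : ℕ) (X : Matrix (Fin n) (Fin p) ℝ) (y : Fin n → ℝ)
    (lam : ℝ) (hlam : 0 < lam)
    (ε : ℝ) (α δ t : Fin p → ℝ)
    (h1 : (Matrix.fromBlocks (Matrix.of fun _ _ => ε)
        (Matrix.of fun (_ : Fin 1) j => α j) (Matrix.of fun i (_ : Fin 1) => α i)
        (Xᵀ * X - Matrix.diagonal δ)).PosSemidef)
    (h2 : ∀ i, (!![δ i, t i; t i, 2*lam] : Matrix (Fin 2) (Fin 2) ℝ).PosSemidef)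
    (h3 : ∀ i, α i + Xᵀ.mulVec y i + t i = 0)
    (bb ss zz : Fin p → ℝ)
    (hfeas : ∀ i, ss i * zz i ≥ (bb i)^2 ∧ 0 ≤ ss i ∧ 0 ≤ zz i ∧ zz i ≤ 1) :
    -(1/2) * ε ≤ (1/2) * (bb ⬝ᵥ (Xᵀ * X - Matrix.diagonal δ).mulVec bb)
      - (Xᵀ.mulVec y) ⬝ᵥ bb + (1/2) * ∑ i, δ i * ss i + lam * ∑ i, zz i := by
  have h2l : (0:ℝ) < 2*lam := by linarith
  have key : ∀ i, 0 ≤ δ i * ss i + 2 * t i * bb i + 2 * lam * zz i := by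
    intro i
    obtain ⟨hsz, hs, hz, hz1⟩ := hfeas i
    have hδ : 0 ≤ δ i := by
      have := (h2 i).dotProduct_mulVec_nonneg ![1, 0]
      simpa [Matrix.mulVec, dotProduct, Fin.sum_univ_succ] using this
    have hdet : 0 ≤ δ i * (2*lam) - t i ^ 2 := by
      have h := (h2 i).dotProduct_mulVec_nonneg ![1, -(t i)/(2*lam)]
      simp [Matrix.mulVec, dotProduct, Fin.sum_univ_succ] at h
      have heq : δ i + t i*(-(t i)/(2*lam)) + -(t i)/(2*lam)*(t i + 2*lam*(-(t i)/(2*lam)))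
          = (δ i*(2*lam) - t i^2)/(2*lam) := by field_simp; ring
      rw [heq, le_div_iff₀ h2l] at h
      linarith
    have hprod : t i ^ 2 * (bb i) ^ 2 ≤ (δ i * (2*lam)) * (ss i * zz i) := by
      have ha : t i ^ 2 ≤ δ i * (2*lam) := by linarith
      exact mul_le_mul ha hsz (sq_nonneg _) (by positivity)
    nlinarith [sq_nonneg (δ i * ss i - 2 * lam * zz i), mul_nonneg hδ hs,
      mul_nonneg hlam.le hz, sq_nonneg (δ i * ss i + 2 * lam * zz i + 2 * t i * bb i)]
  have hsum : 0 ≤ ∑ i, (δ i * ss i + 2 * t i * bb i + 2 * lam * zz i) :=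
    Finset.sum_nonneg fun i _ => key i
  have hq : 0 ≤ ε + 2 * (α ⬝ᵥ bb) + bb ⬝ᵥ (Xᵀ * X - Matrix.diagonal δ).mulVec bb := by
    have h := h1.dotProduct_mulVec_nonneg (Sum.elim (fun _ => (1:ℝ)) bb)
    simp only [Matrix.fromBlocks_mulVec, star_trivial, dotProduct,
      Fintype.sum_sum_type, Sum.elim_inl, Sum.elim_inr, Matrix.mulVec, Matrix.of_apply,
      Fin.sum_univ_one, Pi.add_apply, Matrix.fromBlocks_apply₁₁, Matrix.fromBlocks_apply₁₂,
      Matrix.fromBlocks_apply₂₁, Matrix.fromBlocks_apply₂₂, mul_one, one_mul] at h ⊢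
    have e : ∀ x, bb x * (α x + ∑ x_1, (Xᵀ * X - Matrix.diagonal δ) x x_1 * bb x_1)
        = α x * bb x + bb x * ∑ x_1, (Xᵀ * X - Matrix.diagonal δ) x x_1 * bb x_1 :=
      fun x => by ring
    rw [Finset.sum_congr rfl (fun x _ => e x), Finset.sum_add_distrib] at h
    linarith
  have hα : ∀ i, α i = -(Xᵀ.mulVec y i) - t i := fun i => by have := h3 i; linarith
  have e1 : α ⬝ᵥ bb = -((Xᵀ.mulVec y) ⬝ᵥ bb) - ∑ i, t i * bb i := by
    simp only [dotProduct]
    rw [← Finset.sum_neg_distrib, ← Finset.sum_sub_distrib]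
    exact Finset.sum_congr rfl fun i _ => by rw [hα i]; ring
  have e2 : ∑ i, 2 * t i * bb i = 2 * ∑ i, t i * bb i := by
    rw [Finset.mul_sum]; exact Finset.sum_congr rfl fun i _ => by ring
  rw [Finset.sum_add_distrib, Finset.sum_add_distrib, ← Finset.mul_sum, e2] at hsum
  rw [e1] at hq
  linarith [hsum, hq]
end

section
/- The projection onto the (b,B) coordinates of the closed convex hull of M = {(b,B,z) : ∃ u with uᵢ ≠ 0 ∀i and a {0,1}^p-valued random vector ζ with b = E[u∘ζ], B = E[(u∘ζ)(u∘ζ)ᵀ], zᵢ = P(ζᵢ=1)} equals {(b,B) : B ⪰ bbᵀ}. In particular, for every b ∈ ℝ^p the pair (b, bbᵀ) lies in this projection. -/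
open Matrix Finset

/-- The realization `u ∘ ζ` of a rescaled Bernoulli vector at state `t ∈ {0,1}^p`. -/
noncomputable def state {p : ℕ} (u : Fin p → ℝ) (t : Fin p → Bool) : Fin p → ℝ :=
  fun i => u i * (if t i then 1 else 0)

/-- The moment set `M`: triples `(b, B, z)` given by the first two moments and
activation probabilities of a rescaled Bernoulli random vector `u ∘ ζ` with
all `uᵢ ≠ 0`. -/
def Mset (p : ℕ) : Set ((Fin p → ℝ) × Matrix (Fin p) (Fin p) ℝ × (Fin p → ℝ)) :=
  {x | ∃ (u : Fin p → ℝ) (w : (Fin p → Bool) → ℝ),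
    (∀ i, u i ≠ 0) ∧ (∀ t, 0 ≤ w t) ∧ (∑ t, w t = 1) ∧
    (∀ i, x.1 i = ∑ t, w t * state u t i) ∧
    (∀ i j, x.2.1 i j = ∑ t, w t * (state u t i * state u t j)) ∧
    (∀ i, x.2.2 i = ∑ t, w t * (if t i then 1 else 0))}

/-- Projection onto the `(b, B)` coordinates. -/
def projbB (p : ℕ) (x : (Fin p → ℝ) × Matrix (Fin p) (Fin p) ℝ × (Fin p → ℝ)) :
    (Fin p → ℝ) × Matrix (Fin p) (Fin p) ℝ :=
  (x.1, x.2.1)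

lemma herm_iff' {p : ℕ} (M : Matrix (Fin p) (Fin p) ℝ) :
    M.IsHermitian ↔ ∀ i j, M i j = M j i := by
  constructor
  · intro h i j
    have := congrFun (congrFun h i) j
    simpa using this.symm
  · intro h
    ext i j
    simp [conjTranspose_apply, h i j]

lemma quad_split {p : ℕ} (M : Matrix (Fin p) (Fin p) ℝ) (b v : Fin p → ℝ) :
    dotProduct (star v) ((M - vecMulVec b b) *ᵥ v)
      = (∑ i, ∑ j, v i * M i j * v j) - (∑ i, b i * v i) ^ 2 := by
  have quad_sum : dotProduct (star v) ((M - vecMulVec b b) *ᵥ v)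
      = ∑ i, ∑ j, v i * (M - vecMulVec b b) i j * v j := by
    simp [dotProduct, mulVec, Finset.mul_sum, mul_assoc]
  rw [quad_sum]
  rw [show (∑ i, b i * v i) ^ 2 = ∑ i, ∑ j, v i * (vecMulVec b b) i j * v j by
    simp only [vecMulVec_apply, sq, Finset.sum_mul, Finset.mul_sum]
    exact Finset.sum_congr rfl fun i _ => Finset.sum_congr rfl fun j _ => by ring]
  rw [← Finset.sum_sub_distrib]
  refine Finset.sum_congr rfl fun i _ => ?_
  rw [← Finset.sum_sub_distrib]
  exact Finset.sum_congr rfl fun j _ => by simp [Matrix.sub_apply]; ring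

lemma sum_sq_factor {p : ℕ} (w : ℝ) (a c : Fin p → ℝ) :
    ∑ i, ∑ j, w * (a i * c j) = w * ((∑ i, a i) * (∑ j, c j)) := by
  simp [Finset.mul_sum, Finset.sum_mul]
  exact Finset.sum_comm

lemma mset_psd {p : ℕ} {x : (Fin p → ℝ) × Matrix (Fin p) (Fin p) ℝ × (Fin p → ℝ)}
    (hx : x ∈ Mset p) : (x.2.1 - vecMulVec x.1 x.1).PosSemidef := by
  obtain ⟨u, w, hu, hw, hsum, hb, hB, hz⟩ := hx
  refine Matrix.PosSemidef.of_dotProduct_mulVec_nonneg ?_ ?_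
  · ext i j
    simp only [conjTranspose_apply, Matrix.sub_apply, vecMulVec_apply, star_trivial]
    have hsw : (∑ t, w t * (state u t j * state u t i))
        = ∑ t, w t * (state u t i * state u t j) :=
      Finset.sum_congr rfl fun t _ => by ring
    rw [hB j i, hB i j, hsw, mul_comm (x.1 j)]
  · intro v
    set g : (Fin p → Bool) → ℝ := fun t => ∑ i, v i * state u t i with hg
    have hBq : ∑ i, ∑ j, v i * x.2.1 i j * v j = ∑ t, w t * (g t)^2 := by
      calc ∑ i, ∑ j, v i * x.2.1 i j * v j
          = ∑ i, ∑ j, ∑ t, w t * ((v i * state u t i) * (v j * state u t j)) := by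
            refine Finset.sum_congr rfl fun i _ => Finset.sum_congr rfl fun j _ => ?_
            rw [hB i j, Finset.mul_sum, Finset.sum_mul]
            exact Finset.sum_congr rfl fun t _ => by ring
        _ = ∑ i, ∑ t, ∑ j, w t * ((v i * state u t i) * (v j * state u t j)) :=
            Finset.sum_congr rfl fun i _ => Finset.sum_comm
        _ = ∑ t, ∑ i, ∑ j, w t * ((v i * state u t i) * (v j * state u t j)) :=
            Finset.sum_comm
        _ = ∑ t, w t * (g t)^2 := by
            refine Finset.sum_congr rfl fun t _ => ?_
            rw [sum_sq_factor (w t) (fun i => v i * state u t i) (fun j => v j * state u t j)]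
            rw [hg]; ring
    have hbq : ∑ i, x.1 i * v i = ∑ t, w t * g t := by
      calc ∑ i, x.1 i * v i = ∑ i, ∑ t, w t * (v i * state u t i) := by
            refine Finset.sum_congr rfl fun i _ => ?_
            rw [hb i, Finset.sum_mul]
            exact Finset.sum_congr rfl fun t _ => by ring
        _ = ∑ t, ∑ i, w t * (v i * state u t i) := Finset.sum_comm
        _ = ∑ t, w t * g t := Finset.sum_congr rfl fun t _ => by rw [hg, Finset.mul_sum]
    rw [quad_split, hBq, hbq]
    have cs := Finset.sum_mul_sq_le_sq_mul_sq Finset.univ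
      (fun t => Real.sqrt (w t)) (fun t => Real.sqrt (w t) * g t)
    have e1 : ∀ t : Fin p → Bool, Real.sqrt (w t) * (Real.sqrt (w t) * g t) = w t * g t := by
      intro t; rw [← mul_assoc, Real.mul_self_sqrt (hw t)]
    have e2 : ∀ t : Fin p → Bool, Real.sqrt (w t) ^ 2 = w t := fun t => Real.sq_sqrt (hw t)
    have e3 : ∀ t : Fin p → Bool, (Real.sqrt (w t) * g t)^2 = w t * g t ^ 2 := by
      intro t; rw [mul_pow, Real.sq_sqrt (hw t)]
    simp only [e1, e2, e3] at cs
    rw [hsum, one_mul] at cs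
    linarith

noncomputable def purePt {p : ℕ} (v : Fin p → ℝ) :
    (Fin p → ℝ) × Matrix (Fin p) (Fin p) ℝ × (Fin p → ℝ) :=
  (v, vecMulVec v v, fun i => if v i = 0 then 0 else 1)

lemma purePt_mem {p : ℕ} (v : Fin p → ℝ) : purePt v ∈ Mset p := by
  classical
  refine ⟨fun i => if v i = 0 then 1 else v i,
    fun t => if t = (fun i => decide (v i ≠ 0)) then 1 else 0, ?_, ?_, ?_, ?_, ?_, ?_⟩
  · intro i; by_cases h : v i = 0 <;> simp [h]
  · intro t; positivity
  · simp
  · intro i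
    simp only [ite_mul, one_mul, zero_mul, Finset.sum_ite_eq', Finset.mem_univ, if_true]
    by_cases h : v i = 0 <;> simp [purePt, state, h]
  · intro i j
    simp only [ite_mul, one_mul, zero_mul, Finset.sum_ite_eq', Finset.mem_univ, if_true]
    by_cases h : v i = 0 <;> by_cases h' : v j = 0 <;>
      simp [purePt, state, vecMulVec_apply, h, h']
  · intro i
    simp only [ite_mul, one_mul, zero_mul, Finset.sum_ite_eq', Finset.mem_univ, if_true]
    by_cases h : v i = 0 <;> simp [purePt, h]

lemma psd_mem {p : ℕ} (b : Fin p → ℝ) (B : Matrix (Fin p) (Fin p) ℝ)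
    (h : (B - vecMulVec b b).PosSemidef) :
    (b, B) ∈ projbB p '' (convexHull ℝ (Mset p)) := by
  classical
  rcases Nat.eq_zero_or_pos p with hp | hp
  · subst hp
    have hB : B = vecMulVec b b := by ext i j; exact i.elim0
    exact ⟨purePt b, subset_convexHull ℝ _ (purePt_mem b), by
      simp [projbB, purePt, hB]⟩
  obtain ⟨A, hA⟩ : ∃ A : Matrix (Fin p) (Fin p) ℝ, B - vecMulVec b b = Aᴴ * A := by
    open MatrixOrder in exact CStarAlgebra.nonneg_iff_eq_star_mul_self.mp h.nonneg
  have hp0 : (p : ℝ) ≠ 0 := Nat.cast_ne_zero.mpr hp.ne'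
  set s : ℝ := Real.sqrt p with hs
  have hsq : s * s = p := Real.mul_self_sqrt (Nat.cast_nonneg p)
  set vv : Fin p × Bool → (Fin p → ℝ) :=
    fun ks i => b i + (if ks.2 then 1 else -1) * s * A ks.1 i with hvv
  set wgt : Fin p × Bool → ℝ := fun _ => 1 / (2 * p) with hwgt
  have hw0 : ∀ ks ∈ (univ : Finset (Fin p × Bool)), 0 ≤ wgt ks := by
    intro ks _; positivity
  have hwsum : ∑ ks : Fin p × Bool, wgt ks = 1 := by
    simp [hwgt, Finset.sum_const, Fintype.card_prod, Fintype.card_fin, mul_comm]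
    field_simp
  have hmem := Finset.centerMass_mem_convexHull (univ : Finset (Fin p × Bool)) hw0
    (by rw [hwsum]; norm_num) (fun ks _ => purePt_mem (vv ks))
  rw [Finset.centerMass_eq_of_sum_1 _ _ hwsum] at hmem
  refine ⟨_, hmem, ?_⟩
  have hAB : ∀ i j, ∑ k, A k i * A k j = B i j - b i * b j := by
    intro i j
    have := congrFun (congrFun hA i) j
    simpa [Matrix.mul_apply, conjTranspose_apply, vecMulVec_apply, Matrix.sub_apply] using this.symm
  refine Prod.ext ?_ ?_
  · show (∑ ks : Fin p × Bool, wgt ks • purePt (vv ks)).1 = b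
    rw [Prod.fst_sum]
    funext i
    rw [Finset.sum_apply]
    simp only [Prod.smul_fst, purePt, Pi.smul_apply, smul_eq_mul]
    rw [Fintype.sum_prod_type]
    have : ∀ k : Fin p, ∑ t : Bool, wgt (k, t) * vv (k, t) i = b i * (1 / p) := by
      intro k
      rw [Fintype.sum_bool]
      simp only [hvv, hwgt, if_true, if_false, Bool.false_eq_true]
      field_simp
      ring
    rw [Finset.sum_congr rfl fun k _ => this k, Finset.sum_const, Finset.card_fin,
      nsmul_eq_mul]
    field_simp
  · show (∑ ks : Fin p × Bool, wgt ks • purePt (vv ks)).2.1 = B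
    rw [Prod.snd_sum]
    have h21 : (∑ ks : Fin p × Bool, (wgt ks • purePt (vv ks)).2).1
        = ∑ ks : Fin p × Bool, (wgt ks • purePt (vv ks)).2.1 := Prod.fst_sum
    rw [h21]
    ext i j
    rw [Matrix.sum_apply]
    simp only [Prod.smul_snd, Prod.smul_fst, purePt, Matrix.smul_apply, vecMulVec_apply,
      smul_eq_mul]
    rw [Fintype.sum_prod_type]
    have : ∀ k : Fin p, ∑ t : Bool, wgt (k, t) * (vv (k, t) i * vv (k, t) j)
        = b i * b j * (1 / p) + A k i * A k j := by
      intro k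
      rw [Fintype.sum_bool]
      simp only [hvv, hwgt, if_true, if_false, Bool.false_eq_true]
      have h2p : (2 : ℝ) * p ≠ 0 := by positivity
      field_simp
      linear_combination (2 * A k i * A k j) * hsq
    rw [Finset.sum_congr rfl fun k _ => this k, Finset.sum_add_distrib, Finset.sum_const,
      Finset.card_fin, nsmul_eq_mul, hAB i j]
    field_simp
    ring

lemma convex_Sprime (p : ℕ) :
    Convex ℝ {x : (Fin p → ℝ) × Matrix (Fin p) (Fin p) ℝ × (Fin p → ℝ) |
      (x.2.1 - vecMulVec x.1 x.1).PosSemidef} := by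
  intro x hx y hy a c ha hc hac
  have hx1 := (herm_iff' _).mp hx.1
  have hy1 := (herm_iff' _).mp hy.1
  refine Matrix.PosSemidef.of_dotProduct_mulVec_nonneg ?_ ?_
  · rw [herm_iff']
    intro i j
    have hX := hx1 i j
    have hY := hy1 i j
    simp only [Matrix.sub_apply, vecMulVec_apply] at hX hY ⊢
    have e21 : ∀ i j, (a • x + c • y).2.1 i j = a * x.2.1 i j + c * y.2.1 i j := fun _ _ => rfl
    have e1 : ∀ i, (a • x + c • y).1 i = a * x.1 i + c * y.1 i := fun _ => rfl
    rw [e21 i j, e21 j i, e1 i, e1 j]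
    linear_combination a * hX + c * hY
  · intro v
    have hxq := hx.dotProduct_mulVec_nonneg v
    have hyq := hy.dotProduct_mulVec_nonneg v
    rw [quad_split] at hxq hyq ⊢
    have e21 : ∀ i j, (a • x + c • y).2.1 i j = a * x.2.1 i j + c * y.2.1 i j := fun _ _ => rfl
    have e1 : ∀ i, (a • x + c • y).1 i = a * x.1 i + c * y.1 i := fun _ => rfl
    have hQ : ∑ i, ∑ j, v i * (a • x + c • y).2.1 i j * v j
        = a * (∑ i, ∑ j, v i * x.2.1 i j * v j) + c * (∑ i, ∑ j, v i * y.2.1 i j * v j) := by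
      rw [Finset.mul_sum, Finset.mul_sum, ← Finset.sum_add_distrib]
      refine Finset.sum_congr rfl fun i _ => ?_
      rw [Finset.mul_sum, Finset.mul_sum, ← Finset.sum_add_distrib]
      refine Finset.sum_congr rfl fun j _ => ?_
      rw [e21 i j]; ring
    have hL : ∑ i, (a • x + c • y).1 i * v i
        = a * (∑ i, x.1 i * v i) + c * (∑ i, y.1 i * v i) := by
      rw [Finset.mul_sum, Finset.mul_sum, ← Finset.sum_add_distrib]
      refine Finset.sum_congr rfl fun i _ => ?_
      rw [e1 i]; ring
    rw [hQ, hL]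
    set qx := ∑ i, ∑ j, v i * x.2.1 i j * v j
    set qy := ∑ i, ∑ j, v i * y.2.1 i j * v j
    set sx := ∑ i, x.1 i * v i
    set sy := ∑ i, y.1 i * v i
    nlinarith [mul_nonneg (mul_nonneg ha hc) (sq_nonneg (sx - sy)),
      mul_nonneg ha hxq, mul_nonneg hc hyq, sq_nonneg (sx - sy)]

lemma closed_Sprime (p : ℕ) :
    IsClosed {x : (Fin p → ℝ) × Matrix (Fin p) (Fin p) ℝ × (Fin p → ℝ) |
      (x.2.1 - vecMulVec x.1 x.1).PosSemidef} := by
  have hXc : ∀ i j : Fin p, Continuous fun x :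
      (Fin p → ℝ) × Matrix (Fin p) (Fin p) ℝ × (Fin p → ℝ) => x.2.1 i j :=
    fun i j => (continuous_apply j).comp ((continuous_apply i).comp
      (continuous_fst.comp continuous_snd))
  have hbc : ∀ i : Fin p, Continuous fun x :
      (Fin p → ℝ) × Matrix (Fin p) (Fin p) ℝ × (Fin p → ℝ) => x.1 i :=
    fun i => (continuous_apply i).comp continuous_fst
  have hset : {x : (Fin p → ℝ) × Matrix (Fin p) (Fin p) ℝ × (Fin p → ℝ) |
      (x.2.1 - vecMulVec x.1 x.1).PosSemidef}
      = (⋂ ij : Fin p × Fin p, {x | x.2.1 ij.1 ij.2 - x.1 ij.1 * x.1 ij.2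
          = x.2.1 ij.2 ij.1 - x.1 ij.2 * x.1 ij.1}) ∩
        (⋂ v : Fin p → ℝ, {x | 0 ≤ (∑ i, ∑ j, v i * x.2.1 i j * v j)
          - (∑ i, x.1 i * v i) ^ 2}) := by
    ext x
    simp only [Set.mem_setOf_eq, Set.mem_inter_iff, Set.mem_iInter, Prod.forall]
    constructor
    · intro h
      refine ⟨fun i j => ?_, fun v => ?_⟩
      · have := (herm_iff' _).mp h.1 i j
        simpa [Matrix.sub_apply, vecMulVec_apply] using this
      · have := h.dotProduct_mulVec_nonneg v
        rwa [quad_split] at this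
    · intro h
      refine Matrix.PosSemidef.of_dotProduct_mulVec_nonneg ?_ ?_
      · rw [herm_iff']
        intro i j
        simpa [Matrix.sub_apply, vecMulVec_apply] using h.1 i j
      · intro v
        rw [quad_split]
        exact h.2 v
  rw [hset]
  refine IsClosed.inter (isClosed_iInter fun ij => ?_) (isClosed_iInter fun v => ?_)
  · exact isClosed_eq (((hXc ij.1 ij.2).sub ((hbc ij.1).mul (hbc ij.2))))
      (((hXc ij.2 ij.1).sub ((hbc ij.2).mul (hbc ij.1))))
  · refine isClosed_le continuous_const ?_
    refine Continuous.sub ?_ ?_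
    · exact continuous_finset_sum _ fun i _ => continuous_finset_sum _ fun j _ =>
        (continuous_const.mul (hXc i j)).mul continuous_const
    · exact (continuous_finset_sum _ fun i _ => (hbc i).mul continuous_const).pow 2


/-- the `(b,B)`-projection of the closed convex hull of `M` equals
`{(b,B) : B ⪰ bbᵀ}`; in particular `(b, bbᵀ)` always belongs to this projection. -/
theorem stmt18 (p : ℕ) :
    projbB p '' closure (convexHull ℝ (Mset p))
      = {x : (Fin p → ℝ) × Matrix (Fin p) (Fin p) ℝ |
          (x.2 - Matrix.vecMulVec x.1 x.1).PosSemidef} ∧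
    ∀ b : Fin p → ℝ,
      (b, Matrix.vecMulVec b b) ∈ projbB p '' closure (convexHull ℝ (Mset p)) := by
  have hsub : closure (convexHull ℝ (Mset p)) ⊆
      {x : (Fin p → ℝ) × Matrix (Fin p) (Fin p) ℝ × (Fin p → ℝ) |
        (x.2.1 - vecMulVec x.1 x.1).PosSemidef} :=
    closure_minimal (convexHull_min (fun x hx => mset_psd hx) (convex_Sprime p))
      (closed_Sprime p)
  have heq : projbB p '' closure (convexHull ℝ (Mset p))
      = {x : (Fin p → ℝ) × Matrix (Fin p) (Fin p) ℝ |
          (x.2 - Matrix.vecMulVec x.1 x.1).PosSemidef} := by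
    ext x
    constructor
    · rintro ⟨y, hy, rfl⟩
      exact hsub hy
    · intro hx
      obtain ⟨y, hy, hyeq⟩ := psd_mem x.1 x.2 hx
      exact ⟨y, subset_closure hy, by rw [hyeq]⟩
  refine ⟨heq, fun b => ?_⟩
  rw [heq]
  show (Matrix.vecMulVec b b - Matrix.vecMulVec b b).PosSemidef
  rw [sub_self]
  exact Matrix.PosSemidef.zero
end
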